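/- Let M be a 12-vertex 6-dimensional weak pseudomanifold with complementarity (with 2-sphere links of 4-element faces as needed). Fix a facet α. Then the numbers of facets of M meeting α in exactly 3, 4, 5, 6 vertices are 36, 58, 30 and 7 respectively. -/

import Mathlib

open Finset

/-- `K` is an (abstract) simplicial complex: faces are nonempty finite sets,
closed under passing to nonempty subsets. -/
def IsComplex {V : Type} [DecidableEq V] (K : Finset (Finset V)) : Prop :=
  (∀ σ ∈ K, σ.Nonempty) ∧ ∀ σ ∈ K, ∀ τ ⊆ σ, τ.Nonempty → τ ∈ K

/-- `K` is pure of dimension `d`: every face has at most `d+1` vertices and is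
contained in a face with exactly `d+1` vertices (a facet). -/
def IsPure {V : Type} [DecidableEq V] (d : ℕ) (K : Finset (Finset V)) : Prop :=
  (∀ σ ∈ K, σ.card ≤ d + 1) ∧ ∀ σ ∈ K, ∃ γ ∈ K, σ ⊆ γ ∧ γ.card = d + 1

/-- `K` is a `d`-dimensional weak pseudomanifold: a pure `d`-dimensional simplicial
complex (with at least one facet) in which every `(d-1)`-face (i.e. `d`-element face)
is contained in exactly two facets. -/
def IsWPM {V : Type} [DecidableEq V] (d : ℕ) (K : Finset (Finset V)) : Prop :=
  IsComplex K ∧ IsPure d K ∧ (∃ σ ∈ K, σ.card = d + 1) ∧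
    ∀ σ ∈ K, σ.card = d → (K.filter fun γ => γ.card = d + 1 ∧ σ ⊆ γ).card = 2

/-- Complementarity: exactly one of each complementary pair of nonempty subsets
of the vertex set is a face. -/
def Complementarity {V : Type} [DecidableEq V] [Fintype V] (K : Finset (Finset V)) : Prop :=
  ∀ A : Finset V, A.Nonempty → Aᶜ.Nonempty → (A ∈ K ↔ Aᶜ ∉ K)

/-- The link of `σ` in `K`: all faces `τ` disjoint from `σ` with `σ ∪ τ` a face. -/
def lk {V : Type} [DecidableEq V] (K : Finset (Finset V)) (σ : Finset V) :
    Finset (Finset V) :=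
  K.filter fun τ => σ ∩ τ = ∅ ∧ σ ∪ τ ∈ K

/-- The vertex set of a simplicial complex. -/
def vertSet {V : Type} [DecidableEq V] [Fintype V] (K : Finset (Finset V)) : Finset V :=
  Finset.univ.filter fun v => ({v} : Finset V) ∈ K

/-- Euler characteristic of a simplicial complex. -/
def eulerChar {V : Type} [DecidableEq V] (K : Finset (Finset V)) : ℤ :=
  ∑ σ ∈ K, (-1 : ℤ) ^ (σ.card - 1)

/-- A simplicial complex is connected if any two of its vertices are joined by a
path of edges. -/
def ComplexConnected {V : Type} [DecidableEq V] [Fintype V] (L : Finset (Finset V)) : Prop :=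
  ∀ u ∈ vertSet L, ∀ v ∈ vertSet L,
    Relation.ReflTransGen (fun a b : V => ({a, b} : Finset V) ∈ L) u v

/-- `L` is a circle (cycle complex): a connected 1-dimensional simplicial complex in
which every vertex lies in exactly two edges. -/
def IsCycle {V : Type} [DecidableEq V] [Fintype V] (L : Finset (Finset V)) : Prop :=
  IsComplex L ∧ (∀ σ ∈ L, σ.card ≤ 2) ∧ (∃ σ ∈ L, σ.card = 2) ∧
    (∀ v ∈ vertSet L, (L.filter fun e => e.card = 2 ∧ v ∈ e).card = 2) ∧
    ComplexConnected L

/-- `L` is a closed combinatorial 2-manifold: a 2-dimensional simplicial complex in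
which the link of every vertex is a circle. -/
def IsClosed2Mfd {V : Type} [DecidableEq V] [Fintype V] (L : Finset (Finset V)) : Prop :=
  IsComplex L ∧ (∀ σ ∈ L, σ.card ≤ 3) ∧ (∃ σ ∈ L, σ.card = 3) ∧
    ∀ v ∈ vertSet L, IsCycle (lk L {v})

/-- `L` is a combinatorial 2-sphere: a connected closed combinatorial 2-manifold of
Euler characteristic 2. -/
def Is2Sphere {V : Type} [DecidableEq V] [Fintype V] (L : Finset (Finset V)) : Prop :=
  IsClosed2Mfd L ∧ ComplexConnected L ∧ eulerChar L = 2

/-- The degree of a face: the number of vertices of its link. -/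
def degFace {V : Type} [DecidableEq V] [Fintype V] (K : Finset (Finset V))
    (σ : Finset V) : ℕ :=
  (vertSet (lk K σ)).card

variable {M : Finset (Finset (Fin 12))}

lemma aux_dcount {X Y : Type} (F : Finset X) (T : Finset Y) (P : X → Y → Prop)
    [∀ x y, Decidable (P x y)] :
    ∑ x ∈ F, (T.filter (fun y => P x y)).card = ∑ y ∈ T, (F.filter (fun x => P x y)).card := by
  simp only [Finset.card_filter]
  exact Finset.sum_comm

lemma aux_fiber_sum {X : Type} [DecidableEq X] (F : Finset X) (t : X → ℕ)
    (ht : ∀ x ∈ F, t x < 8) (w : ℕ → ℕ) :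
    ∑ x ∈ F, w (t x) = ∑ j ∈ Finset.range 8, (F.filter (fun x => t x = j)).card * w j := by
  rw [← Finset.sum_fiberwise_of_maps_to (fun x hx => Finset.mem_range.2 (ht x hx)) (fun x => w (t x))]
  refine Finset.sum_congr rfl fun j hj => ?_
  rw [Finset.sum_congr rfl (fun x hx => by rw [(Finset.mem_filter.1 hx).2]), Finset.sum_const,
    smul_eq_mul, mul_comm]

lemma aux_fiber_sum_int {X : Type} [DecidableEq X] (F : Finset X) (t : X → ℕ)
    (ht : ∀ x ∈ F, t x ∈ Finset.Icc 5 7) (w : ℕ → ℤ) :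
    ∑ x ∈ F, w (t x) = ∑ j ∈ Finset.Icc 5 7, ((F.filter (fun x => t x = j)).card : ℤ) * w j := by
  rw [← Finset.sum_fiberwise_of_maps_to ht (fun x => w (t x))]
  refine Finset.sum_congr rfl fun j hj => ?_
  rw [Finset.sum_congr rfl (fun x hx => by rw [(Finset.mem_filter.1 hx).2]), Finset.sum_const,
    nsmul_eq_mul]

lemma aux_mem_of_face_subset (hC : IsComplex M) {σ τ : Finset (Fin 12)} (hσ : σ ∈ M)
    (hτ : τ ⊆ σ) (hne : τ.Nonempty) : τ ∈ M := hC.2 σ hσ τ hτ hne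

lemma aux_filter_subsets (hC : IsComplex M) {σ : Finset (Fin 12)} (hσ : σ ∈ M) {c : ℕ}
    (hc : 1 ≤ c) :
    M.filter (fun τ => τ.card = c ∧ τ ⊆ σ) = σ.powersetCard c := by
  ext τ
  simp only [mem_filter, mem_powersetCard]
  constructor
  · rintro ⟨-, h1, h2⟩; exact ⟨h2, h1⟩
  · rintro ⟨h2, h1⟩
    exact ⟨aux_mem_of_face_subset hC hσ h2 (card_pos.1 (h1 ▸ hc)), h1, h2⟩

/-- faces of card c meeting α in all c vertices are exactly c-subsets of α -/
lemma aux_typefull (hC : IsComplex M) {α : Finset (Fin 12)} (hα : α ∈ M) {c : ℕ} (hc : 1 ≤ c) :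
    M.filter (fun σ => σ.card = c ∧ (α ∩ σ).card = c) = α.powersetCard c := by
  ext σ
  simp only [mem_filter, mem_powersetCard]
  constructor
  · rintro ⟨hσM, hc', hic⟩
    have h1 : α ∩ σ = σ :=
      Finset.eq_of_subset_of_card_le Finset.inter_subset_right (by omega)
    exact ⟨by rw [← h1]; exact Finset.inter_subset_left, hc'⟩
  · rintro ⟨hsub, hc'⟩
    refine ⟨aux_mem_of_face_subset hC hα hsub (card_pos.1 (by omega)), hc', ?_⟩
    rw [Finset.inter_eq_right.2 hsub, hc']

lemma aux_type_gt {α : Finset (Fin 12)} {m j : ℕ} (h : m < j) :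
    M.filter (fun σ => σ.card = m ∧ (α ∩ σ).card = j) = ∅ := by
  refine Finset.eq_empty_of_forall_notMem fun σ hσ => ?_
  obtain ⟨-, h1, h2⟩ := Finset.mem_filter.1 hσ
  have := Finset.card_le_card (Finset.inter_subset_right : α ∩ σ ⊆ σ)
  omega

lemma aux_inter_le_seven {α β : Finset (Fin 12)} (hαcard : α.card = 7) : (α ∩ β).card ≤ 7 := by
  have := Finset.card_le_card (Finset.inter_subset_left : α ∩ β ⊆ α)
  omega

lemma aux_inter_ge_two {α β : Finset (Fin 12)} (hαcard : α.card = 7) (hβ : β.card = 7) :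
    2 ≤ (α ∩ β).card := by
  have h1 := Finset.card_union_add_card_inter α β
  have h2 : (α ∪ β).card ≤ 12 := by
    have := Finset.card_le_card (Finset.subset_univ (α ∪ β))
    simpa using this
  omega

/-- complement pairing -/
lemma aux_pairing (hcomp : ∀ A : Finset (Fin 12), A.Nonempty → Aᶜ.Nonempty → (A ∈ M ↔ Aᶜ ∉ M))
    {α : Finset (Fin 12)} (hαcard : α.card = 7) {m j : ℕ} (hjm : j ≤ m) (hj7 : j ≤ 7)
    (hm1 : 1 ≤ m) (hm11 : m ≤ 11) :
    (M.filter (fun s => s.card = m ∧ (α ∩ s).card = j)).card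
      + (M.filter (fun s => s.card = 12 - m ∧ (α ∩ s).card = 7 - j)).card
      = Nat.choose 7 j * Nat.choose 5 (m - j) := by
  classical
  have hcard12 : (Finset.univ : Finset (Fin 12)).card = 12 := by simp
  set U : Finset (Finset (Fin 12)) :=
    Finset.univ.filter (fun s : Finset (Fin 12) => s.card = m ∧ (α ∩ s).card = j) with hU
  -- card U
  have hUcard : U.card = Nat.choose 7 j * Nat.choose 5 (m - j) := by
    have e1 : (α.powersetCard j).card = Nat.choose 7 j := by
      rw [Finset.card_powersetCard, hαcard]
    have e2 : (αᶜ.powersetCard (m - j)).card = Nat.choose 5 (m - j) := by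
      rw [Finset.card_powersetCard, Finset.card_compl, hαcard]; rfl
    rw [← e1, ← e2, ← Finset.card_product]
    apply Finset.card_nbij' (fun s => (α ∩ s, s \ α)) (fun p => p.1 ∪ p.2)
    · intro s hs
      simp only [Finset.mem_coe, hU, mem_filter, mem_univ, true_and] at hs
      simp only [Finset.mem_coe, Finset.mem_product, mem_powersetCard]
      refine ⟨⟨inter_subset_left, hs.2⟩, ?_, ?_⟩
      · intro x hx; simp only [Finset.mem_compl]
        exact (Finset.mem_sdiff.1 hx).2
      · have := Finset.card_inter_add_card_sdiff s α
        rw [Finset.inter_comm] at this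
        omega
    · intro p hp
      simp only [Finset.mem_coe, Finset.mem_product, mem_powersetCard] at hp
      obtain ⟨⟨h1, h2⟩, h3, h4⟩ := hp
      have hdisj : Disjoint p.1 p.2 := by
        refine Finset.disjoint_left.2 fun a ha hb => ?_
        exact absurd (h1 ha) (Finset.mem_compl.1 (h3 hb))
      simp only [Finset.mem_coe, hU, mem_filter, mem_univ, true_and]
      constructor
      · rw [Finset.card_union_of_disjoint hdisj, h2, h4]; omega
      · have : α ∩ (p.1 ∪ p.2) = p.1 := by
          rw [Finset.inter_union_distrib_left]
          rw [Finset.inter_eq_right.2 h1]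
          have : α ∩ p.2 = ∅ := by
            refine Finset.eq_empty_of_forall_notMem fun a ha => ?_
            have := Finset.mem_inter.1 ha
            exact (Finset.mem_compl.1 (h3 this.2)) this.1
          rw [this, Finset.union_empty]
        rw [this, h2]
    · intro s hs
      simp only
      ext a
      simp only [Finset.mem_union, Finset.mem_inter, Finset.mem_sdiff]
      tauto
    · intro p hp
      simp only [Finset.mem_coe, Finset.mem_product, mem_powersetCard] at hp
      obtain ⟨⟨h1, h2⟩, h3, h4⟩ := hp
      have hint : α ∩ (p.1 ∪ p.2) = p.1 := by
        rw [Finset.inter_union_distrib_left, Finset.inter_eq_right.2 h1]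
        have : α ∩ p.2 = ∅ := by
          refine Finset.eq_empty_of_forall_notMem fun a ha => ?_
          have := Finset.mem_inter.1 ha
          exact (Finset.mem_compl.1 (h3 this.2)) this.1
        rw [this, Finset.union_empty]
      have hsd : (p.1 ∪ p.2) \ α = p.2 := by
        ext a
        simp only [Finset.mem_sdiff, Finset.mem_union]
        constructor
        · rintro ⟨h | h, hna⟩
          · exact absurd (h1 h) hna
          · exact h
        · intro h; exact ⟨Or.inr h, fun hx => (Finset.mem_compl.1 (h3 h)) hx⟩
      exact Prod.ext hint hsd
  -- split U into faces and nonfaces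
  have hsplit : (U.filter (fun s => s ∈ M)).card + (U.filter (fun s => s ∉ M)).card = U.card :=
    Finset.card_filter_add_card_filter_not _
  -- faces part equals first term
  have h1 : (U.filter (fun s => s ∈ M)).card
      = (M.filter (fun s => s.card = m ∧ (α ∩ s).card = j)).card := by
    congr 1
    ext s
    simp only [hU, mem_filter, mem_univ, true_and]
    tauto
  -- nonfaces part bijects with second term via compl
  have h2 : (U.filter (fun s => s ∉ M)).card
      = (M.filter (fun s => s.card = 12 - m ∧ (α ∩ s).card = 7 - j)).card := by
    apply Finset.card_nbij' (fun s => sᶜ) (fun s => sᶜ)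
    · intro s hs
      simp only [Finset.mem_coe, hU, mem_filter, mem_univ, true_and] at hs
      obtain ⟨⟨hm, hj⟩, hnf⟩ := hs
      have hcc : sᶜ.card = 12 - m := by rw [Finset.card_compl, hm]; simp
      have hne : s.Nonempty := Finset.card_pos.1 (by omega)
      have hnec : sᶜ.Nonempty := Finset.card_pos.1 (by omega)
      have hmem : sᶜ ∈ M := by
        by_contra hx
        exact hnf ((hcomp s hne hnec).2 hx)
      refine Finset.mem_filter.2 ⟨hmem, hcc, ?_⟩
      have h5 : α ∩ sᶜ = α \ s := by ext a; simp
      rw [h5]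
      have := Finset.card_inter_add_card_sdiff α s
      omega
    · intro s hs
      simp only [Finset.mem_coe, mem_filter] at hs
      obtain ⟨hmem, hm', hj'⟩ := hs
      have hcc : sᶜ.card = m := by rw [Finset.card_compl, hm']; simp; omega
      simp only [Finset.mem_coe, hU, mem_filter, mem_univ, true_and]
      have hne : s.Nonempty := Finset.card_pos.1 (by omega)
      have hnec : sᶜ.Nonempty := Finset.card_pos.1 (by omega)
      refine ⟨⟨hcc, ?_⟩, ?_⟩
      · have h5 : α ∩ sᶜ = α \ s := by ext a; simp
        rw [h5]
        have := Finset.card_inter_add_card_sdiff α s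
        omega
      · intro hx
        exact ((hcomp s hne hnec).1 hmem) hx
    · intro s _; simp
    · intro s _; simp
  omega

lemma aux_n7 {α : Finset (Fin 12)} (hα : α ∈ M) (hαcard : α.card = 7) :
    M.filter (fun β => β.card = 7 ∧ (α ∩ β).card = 7) = {α} := by
  ext β
  simp only [mem_filter, mem_singleton]
  constructor
  · rintro ⟨hβM, hβ7, hi⟩
    have h1 : α ∩ β = α :=
      Finset.eq_of_subset_of_card_le Finset.inter_subset_left (by omega)
    have h2 : α ⊆ β := by rw [← h1]; exact Finset.inter_subset_right
    exact (Finset.eq_of_subset_of_card_le h2 (by omega)).symm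
  · rintro rfl
    exact ⟨hα, hαcard, by rw [Finset.inter_self]; exact hαcard⟩

lemma aux_facet_count (hM : IsWPM 6 M)
    (hcomp : ∀ A : Finset (Fin 12), A.Nonempty → Aᶜ.Nonempty → (A ∈ M ↔ Aᶜ ∉ M)) :
    (M.filter (fun β => β.card = 7)).card = 132 := by
  have hf5 : (M.filter (fun τ => τ.card = 6)).card = 462 := by
    classical
    set U : Finset (Finset (Fin 12)) :=
      Finset.univ.filter (fun s : Finset (Fin 12) => s.card = 6) with hU
    have hUcard : U.card = 924 := by
      have h : U = Finset.univ.powersetCard 6 := by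
        rw [Finset.powersetCard_eq_filter, Finset.powerset_univ]
      rw [h, Finset.card_powersetCard]
      decide
    have hsplit : (U.filter (fun s => s ∈ M)).card + (U.filter (fun s => s ∉ M)).card = U.card :=
      Finset.card_filter_add_card_filter_not _
    have h1 : (U.filter (fun s => s ∈ M)).card = (M.filter (fun τ => τ.card = 6)).card := by
      have h : U.filter (fun s => s ∈ M) = M.filter (fun τ => τ.card = 6) := by
        ext s
        simp only [hU, mem_filter, mem_univ, true_and]
        exact ⟨fun h => ⟨h.2, h.1⟩, fun h => ⟨h.2, h.1⟩⟩
      rw [h]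
    have h2 : (U.filter (fun s => s ∉ M)).card = (U.filter (fun s => s ∈ M)).card := by
      apply Finset.card_nbij' (fun s => sᶜ) (fun s => sᶜ)
      · intro s hs
        simp only [Finset.mem_coe, hU, mem_filter, mem_univ, true_and] at hs ⊢
        obtain ⟨h6, hnf⟩ := hs
        have hc : sᶜ.card = 6 := by rw [Finset.card_compl, h6]; rfl
        have hne : s.Nonempty := Finset.card_pos.1 (by omega)
        have hnec : sᶜ.Nonempty := Finset.card_pos.1 (by omega)
        exact ⟨hc, by by_contra hx; exact hnf ((hcomp s hne hnec).2 hx)⟩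
      · intro s hs
        simp only [Finset.mem_coe, hU, mem_filter, mem_univ, true_and] at hs ⊢
        obtain ⟨h6, hf⟩ := hs
        have hc : sᶜ.card = 6 := by rw [Finset.card_compl, h6]; rfl
        have hne : s.Nonempty := Finset.card_pos.1 (by omega)
        have hnec : sᶜ.Nonempty := Finset.card_pos.1 (by omega)
        exact ⟨hc, (hcomp s hne hnec).1 hf⟩
      · intro s _; simp
      · intro s _; simp
    omega
  -- double count (facet, 6-face) incidences
  have hdc := aux_dcount (M.filter (fun β => β.card = 7)) (M.filter (fun τ => τ.card = 6))
    (fun β τ => τ ⊆ β)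
  have hL : ∑ β ∈ M.filter (fun β => β.card = 7),
      ((M.filter (fun τ => τ.card = 6)).filter (fun τ => τ ⊆ β)).card
      = (M.filter (fun β => β.card = 7)).card * 7 := by
    rw [Finset.sum_congr rfl (fun β hβ => ?_), Finset.sum_const, smul_eq_mul]
    obtain ⟨hβM, hβ7⟩ := Finset.mem_filter.1 hβ
    rw [Finset.filter_filter, aux_filter_subsets hM.1 hβM (by norm_num),
      Finset.card_powersetCard, hβ7]
    decide
  have hR : ∑ τ ∈ M.filter (fun τ => τ.card = 6),
      ((M.filter (fun β => β.card = 7)).filter (fun β => τ ⊆ β)).card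
      = (M.filter (fun τ => τ.card = 6)).card * 2 := by
    rw [Finset.sum_congr rfl (fun τ hτ => ?_), Finset.sum_const, smul_eq_mul]
    obtain ⟨hτM, hτ6⟩ := Finset.mem_filter.1 hτ
    rw [Finset.filter_filter]
    exact hM.2.2.2 τ hτM hτ6
  rw [hL, hR, hf5] at hdc
  omega


lemma aux_pair_unique (hM : IsWPM 6 M) {τ α β β' : Finset (Fin 12)} (hτM : τ ∈ M)
    (hτ6 : τ.card = 6)
    (hα : α ∈ M.filter (fun γ => γ.card = 7 ∧ τ ⊆ γ))
    (hβ : β ∈ M.filter (fun γ => γ.card = 7 ∧ τ ⊆ γ))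
    (hβ' : β' ∈ M.filter (fun γ => γ.card = 7 ∧ τ ⊆ γ))
    (h1 : β ≠ α) (h2 : β' ≠ α) : β = β' := by
  obtain ⟨x, y, hxy, hs⟩ := Finset.card_eq_two.1 (hM.2.2.2 τ hτM hτ6)
  rw [hs] at hα hβ hβ'
  simp only [mem_insert, mem_singleton] at hα hβ hβ'
  rcases hα with rfl | rfl <;> rcases hβ with rfl | rfl <;> rcases hβ' with rfl | rfl <;>
    first | rfl | (exfalso; tauto)

lemma aux_pair_other (hM : IsWPM 6 M) {τ α : Finset (Fin 12)} (hτM : τ ∈ M)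
    (hτ6 : τ.card = 6)
    (hα : α ∈ M.filter (fun γ => γ.card = 7 ∧ τ ⊆ γ)) :
    ∃ β ∈ M.filter (fun γ => γ.card = 7 ∧ τ ⊆ γ), β ≠ α := by
  obtain ⟨x, y, hxy, hs⟩ := Finset.card_eq_two.1 (hM.2.2.2 τ hτM hτ6)
  rw [hs] at hα ⊢
  simp only [mem_insert, mem_singleton] at hα ⊢
  rcases hα with rfl | rfl
  · exact ⟨y, Or.inr rfl, hxy.symm⟩
  · exact ⟨x, Or.inl rfl, hxy⟩

lemma aux_n6 (hM : IsWPM 6 M) {α : Finset (Fin 12)} (hα : α ∈ M) (hαcard : α.card = 7) :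
    (M.filter fun β => β.card = 7 ∧ (α ∩ β).card = 6).card = 7 := by
  have hbij : (M.filter fun β => β.card = 7 ∧ (α ∩ β).card = 6).card
      = (α.powersetCard 6).card := by
    apply Finset.card_nbij (fun β => α ∩ β)
    · intro β hβ
      obtain ⟨hβM, hβ7, h6⟩ := Finset.mem_filter.1 hβ
      exact Finset.mem_powersetCard.2 ⟨Finset.inter_subset_left, h6⟩
    · intro β hβ β' hβ' heq
      simp only [Finset.coe_filter, Set.mem_setOf_eq] at hβ hβ'
      obtain ⟨hβM, hβ7, h6⟩ := hβ
      obtain ⟨hβM', hβ7', h6'⟩ := hβ'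
      simp only at heq
      have hτM : α ∩ β ∈ M := aux_mem_of_face_subset hM.1 hα Finset.inter_subset_left
        (Finset.card_pos.1 (by omega))
      have hne : β ≠ α := fun h => by rw [h, Finset.inter_self] at h6; omega
      have hne' : β' ≠ α := fun h => by rw [h, Finset.inter_self] at h6'; omega
      refine aux_pair_unique hM hτM h6 (Finset.mem_filter.2 ⟨hα, hαcard, Finset.inter_subset_left⟩)
        (Finset.mem_filter.2 ⟨hβM, hβ7, Finset.inter_subset_right⟩)
        (Finset.mem_filter.2 ⟨hβM', hβ7', heq ▸ Finset.inter_subset_right⟩) hne hne'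
    · intro τ hτ
      obtain ⟨hτα, hτ6⟩ := Finset.mem_powersetCard.1 (Finset.mem_coe.1 hτ)
      have hτM : τ ∈ M := aux_mem_of_face_subset hM.1 hα hτα (Finset.card_pos.1 (by omega))
      have hαm : α ∈ M.filter (fun γ => γ.card = 7 ∧ τ ⊆ γ) :=
        Finset.mem_filter.2 ⟨hα, hαcard, hτα⟩
      obtain ⟨β, hβm, hβne⟩ := aux_pair_other hM hτM hτ6 hαm
      obtain ⟨hβM, hβ7, hτβ⟩ := Finset.mem_filter.1 hβm
      have hsub : τ ⊆ α ∩ β := Finset.subset_inter hτα hτβ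
      have hci : (α ∩ β).card ≤ 7 := aux_inter_le_seven hαcard
      have hge : 6 ≤ (α ∩ β).card := by
        have := Finset.card_le_card hsub; omega
      have h6 : (α ∩ β).card = 6 := by
        rcases Nat.lt_or_ge (α ∩ β).card 7 with h | h
        · omega
        · exfalso
          have he : α ∩ β = α :=
            Finset.eq_of_subset_of_card_le Finset.inter_subset_left (by omega)
          have : α ⊆ β := by rw [← he]; exact Finset.inter_subset_right
          exact hβne (Finset.eq_of_subset_of_card_le this (by omega)).symm
      refine ⟨β, Finset.mem_coe.2 (Finset.mem_filter.2 ⟨hβM, hβ7, h6⟩), ?_⟩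
      exact (Finset.eq_of_subset_of_card_le hsub (by omega)).symm
  rw [hbij, Finset.card_powersetCard, hαcard]
  decide

lemma aux_count6sub (α : Finset (Fin 12)) {β : Finset (Fin 12)} (hβ7 : β.card = 7) (j : ℕ) :
    ((β.powersetCard 6).filter fun τ => (α ∩ τ).card = j).card
      = (if (α ∩ β).card - 1 = j then (α ∩ β).card else 0)
        + (if (α ∩ β).card = j then 7 - (α ∩ β).card else 0) := by
  have key : ∀ v ∈ β, α ∩ β.erase v = (α ∩ β).erase v := by
    intro v hv; ext a
    simp only [Finset.mem_inter, Finset.mem_erase]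
    tauto
  have hbij : ((β.powersetCard 6).filter fun τ => (α ∩ τ).card = j).card
      = (β.filter fun v => ((α ∩ β).erase v).card = j).card := by
    symm
    apply Finset.card_nbij (fun v => β.erase v)
    · intro v hv
      obtain ⟨hvβ, hQ⟩ := Finset.mem_filter.1 hv
      refine Finset.mem_filter.2 ⟨Finset.mem_powersetCard.2 ⟨Finset.erase_subset _ _, ?_⟩, ?_⟩
      · rw [Finset.card_erase_of_mem hvβ, hβ7]
      · rw [key v hvβ]; exact hQ
    · intro v hv w hw heq
      simp only [Finset.coe_filter, Set.mem_setOf_eq] at hv hw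
      simp only at heq
      by_contra hne
      have : v ∈ β.erase w := Finset.mem_erase.2 ⟨hne, hv.1⟩
      rw [← heq] at this
      exact (Finset.mem_erase.1 this).1 rfl
    · intro τ hτ
      obtain ⟨hpc, hR⟩ := Finset.mem_filter.1 (Finset.mem_coe.1 hτ)
      obtain ⟨hsub, hc6⟩ := Finset.mem_powersetCard.1 hpc
      have hsd : (β \ τ).card = 1 := by rw [Finset.card_sdiff_of_subset hsub, hβ7, hc6]
      obtain ⟨v, hv⟩ := Finset.card_eq_one.1 hsd
      have hvm : v ∈ β \ τ := hv ▸ Finset.mem_singleton_self v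
      have hvβ : v ∈ β := (Finset.mem_sdiff.1 hvm).1
      have hvτ : v ∉ τ := (Finset.mem_sdiff.1 hvm).2
      have hτv : τ = β.erase v := by
        ext a
        simp only [Finset.mem_erase]
        constructor
        · intro ha; exact ⟨fun h => hvτ (h ▸ ha), hsub ha⟩
        · rintro ⟨hav, haβ⟩
          by_contra haτ
          have : a ∈ β \ τ := Finset.mem_sdiff.2 ⟨haβ, haτ⟩
          rw [hv] at this
          exact hav (Finset.mem_singleton.1 this)
      refine ⟨v, Finset.mem_coe.2 (Finset.mem_filter.2 ⟨hvβ, ?_⟩), hτv.symm⟩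
      rw [← key v hvβ, ← hτv]
      exact hR
  rw [hbij]
  have hsub2 : α ∩ β ⊆ β := Finset.inter_subset_right
  have hu : (α ∩ β) ∪ (β \ (α ∩ β)) = β := Finset.union_sdiff_of_subset hsub2
  have hsplit : (β.filter fun v => ((α ∩ β).erase v).card = j)
      = ((α ∩ β).filter fun v => ((α ∩ β).erase v).card = j)
        ∪ ((β \ (α ∩ β)).filter fun v => ((α ∩ β).erase v).card = j) := by
    rw [← Finset.filter_union, hu]
  rw [hsplit]
  rw [Finset.card_union_of_disjoint
    (Finset.disjoint_filter_filter
      (Finset.disjoint_sdiff : Disjoint (α ∩ β) (β \ (α ∩ β))))]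
  have h1 : ((α ∩ β).filter fun v => ((α ∩ β).erase v).card = j).card
      = if (α ∩ β).card - 1 = j then (α ∩ β).card else 0 := by
    split_ifs with h
    · rw [Finset.filter_true_of_mem]
      intro v hv
      rw [Finset.card_erase_of_mem hv]
      exact h
    · rw [Finset.filter_false_of_mem, Finset.card_empty]
      intro v hv hc
      rw [Finset.card_erase_of_mem hv] at hc
      exact h hc
  have h2 : ((β \ (α ∩ β)).filter fun v => ((α ∩ β).erase v).card = j).card
      = if (α ∩ β).card = j then 7 - (α ∩ β).card else 0 := by
    have hc : (β \ (α ∩ β)).card = 7 - (α ∩ β).card := by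
      rw [Finset.card_sdiff_of_subset hsub2, hβ7]
    split_ifs with h
    · rw [Finset.filter_true_of_mem, hc]
      intro v hv
      rw [Finset.erase_eq_of_notMem (Finset.mem_sdiff.1 hv).2]
      exact h
    · rw [Finset.filter_false_of_mem, Finset.card_empty]
      intro v hv hcc
      rw [Finset.erase_eq_of_notMem (Finset.mem_sdiff.1 hv).2] at hcc
      exact h hcc
  rw [h1, h2]


lemma aux_twoB (hM : IsWPM 6 M) {α : Finset (Fin 12)} (hα : α ∈ M) (hαcard : α.card = 7)
    (j : ℕ) :
    (M.filter fun τ => τ.card = 6 ∧ (α ∩ τ).card = j).card * 2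
      = ∑ k ∈ Finset.range 8, (M.filter fun β => β.card = 7 ∧ (α ∩ β).card = k).card *
          ((if k - 1 = j then k else 0) + (if k = j then 7 - k else 0)) := by
  have hdc := aux_dcount (M.filter (fun β => β.card = 7))
      (M.filter (fun τ => τ.card = 6 ∧ (α ∩ τ).card = j)) (fun β τ => τ ⊆ β)
  have hR : ∑ τ ∈ M.filter (fun τ => τ.card = 6 ∧ (α ∩ τ).card = j),
      ((M.filter (fun β => β.card = 7)).filter (fun β => τ ⊆ β)).card
      = (M.filter fun τ => τ.card = 6 ∧ (α ∩ τ).card = j).card * 2 := by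
    rw [Finset.sum_congr rfl (fun τ hτ => ?_), Finset.sum_const, smul_eq_mul]
    obtain ⟨hτM, hτ6, -⟩ := Finset.mem_filter.1 hτ
    rw [Finset.filter_filter]
    exact hM.2.2.2 τ hτM hτ6
  have hL : ∑ β ∈ M.filter (fun β => β.card = 7),
      ((M.filter (fun τ => τ.card = 6 ∧ (α ∩ τ).card = j)).filter (fun τ => τ ⊆ β)).card
      = ∑ k ∈ Finset.range 8, (M.filter fun β => β.card = 7 ∧ (α ∩ β).card = k).card *
          ((if k - 1 = j then k else 0) + (if k = j then 7 - k else 0)) := by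
    rw [Finset.sum_congr rfl (fun β hβ => ?_)]
    · rw [aux_fiber_sum (M.filter (fun β => β.card = 7)) (fun β => (α ∩ β).card)
        (fun β hβ => by show (α ∩ β).card < 8
                        have := aux_inter_le_seven (β := β) hαcard; omega)
        (fun k => (if k - 1 = j then k else 0) + (if k = j then 7 - k else 0))]
      refine Finset.sum_congr rfl fun k hk => ?_
      rw [Finset.filter_filter]
    · obtain ⟨hβM, hβ7⟩ := Finset.mem_filter.1 hβ
      have he : (M.filter (fun τ => τ.card = 6 ∧ (α ∩ τ).card = j)).filter (fun τ => τ ⊆ β)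
          = (β.powersetCard 6).filter (fun τ => (α ∩ τ).card = j) := by
        ext τ
        simp only [Finset.mem_filter, Finset.mem_powersetCard]
        constructor
        · rintro ⟨⟨hτM, h6, hj⟩, hsub⟩
          exact ⟨⟨hsub, h6⟩, hj⟩
        · rintro ⟨⟨hsub, h6⟩, hj⟩
          exact ⟨⟨aux_mem_of_face_subset hM.1 hβM hsub (Finset.card_pos.1 (by omega)), h6, hj⟩,
            hsub⟩
      rw [he, aux_count6sub α hβ7 j]
  rw [hL, hR] at hdc
  exact hdc.symm ▸ hdc ▸ rfl

lemma aux_sumVEF (hC : IsComplex M) {α : Finset (Fin 12)} (hα : α ∈ M) (hαcard : α.card = 7)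
    (m : ℕ) :
    ∑ γ ∈ α.powersetCard 4, (M.filter fun σ => σ.card = m ∧ γ ⊆ σ).card
      = ∑ j ∈ Finset.range 8,
          (M.filter fun σ => σ.card = m ∧ (α ∩ σ).card = j).card * Nat.choose j 4 := by
  have hdc := aux_dcount (α.powersetCard 4) (M.filter (fun σ => σ.card = m))
      (fun γ σ => γ ⊆ σ)
  have hL : ∑ γ ∈ α.powersetCard 4,
      ((M.filter (fun σ => σ.card = m)).filter (fun σ => γ ⊆ σ)).card
      = ∑ γ ∈ α.powersetCard 4, (M.filter fun σ => σ.card = m ∧ γ ⊆ σ).card := by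
    refine Finset.sum_congr rfl fun γ hγ => ?_
    rw [Finset.filter_filter]
  have hR : ∑ σ ∈ M.filter (fun σ => σ.card = m),
      ((α.powersetCard 4).filter (fun γ => γ ⊆ σ)).card
      = ∑ j ∈ Finset.range 8,
          (M.filter fun σ => σ.card = m ∧ (α ∩ σ).card = j).card * Nat.choose j 4 := by
    rw [Finset.sum_congr rfl (fun σ hσ => ?_)]
    · rw [aux_fiber_sum (M.filter (fun σ => σ.card = m)) (fun σ => (α ∩ σ).card)
        (fun σ hσ => by show (α ∩ σ).card < 8
                        have := aux_inter_le_seven (β := σ) hαcard; omega)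
        (fun j => Nat.choose j 4)]
      refine Finset.sum_congr rfl fun k hk => ?_
      rw [Finset.filter_filter]
    · have he : (α.powersetCard 4).filter (fun γ => γ ⊆ σ) = (α ∩ σ).powersetCard 4 := by
        ext γ
        simp only [Finset.mem_filter, Finset.mem_powersetCard, Finset.subset_inter_iff]
        tauto
      rw [he, Finset.card_powersetCard]
  rw [hR] at hdc
  rw [← hdc, hL]


set_option maxHeartbeats 1600000 in
lemma aux_euler (hM : IsWPM 6 M) {α γ : Finset (Fin 12)} (hα : α ∈ M) (hαcard : α.card = 7)
    (hγ : γ ∈ α.powersetCard 4) (hE : eulerChar (lk M γ) = 2) :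
    ((M.filter fun σ => σ.card = 5 ∧ γ ⊆ σ).card : ℤ)
      - (M.filter fun τ => τ.card = 6 ∧ γ ⊆ τ).card
      + (M.filter fun β => β.card = 7 ∧ γ ⊆ β).card = 2 := by
  obtain ⟨hγα, hγ4⟩ := Finset.mem_powersetCard.1 hγ
  have hγM : γ ∈ M := aux_mem_of_face_subset hM.1 hα hγα (Finset.card_pos.1 (by omega))
  -- rewrite Euler characteristic of the link as a sum over proper cofaces of γ
  have h1 : eulerChar (lk M γ)
      = ∑ ρ ∈ M.filter (fun ρ => γ ⊆ ρ ∧ γ ≠ ρ), (-1 : ℤ) ^ (ρ.card - 5) := by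
    unfold eulerChar lk
    refine Finset.sum_nbij' (fun τ => γ ∪ τ) (fun ρ => ρ \ γ) ?_ ?_ ?_ ?_ ?_
    · intro τ hτ
      obtain ⟨hτM, hdisj, hu⟩ := Finset.mem_filter.1 hτ
      refine Finset.mem_filter.2 ⟨hu, Finset.subset_union_left, ?_⟩
      obtain ⟨a, ha⟩ := hM.1.1 τ hτM
      intro h
      have haγ : a ∈ γ := h ▸ (Finset.mem_union_right γ ha)
      have : a ∈ γ ∩ τ := Finset.mem_inter.2 ⟨haγ, ha⟩
      rw [hdisj] at this
      exact absurd this (Finset.notMem_empty a)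
    · intro ρ hρ
      obtain ⟨hρM, hsub, hne⟩ := Finset.mem_filter.1 hρ
      have hnem : (ρ \ γ).Nonempty := by
        rw [Finset.sdiff_nonempty]
        intro h
        exact hne (Finset.Subset.antisymm hsub h)
      refine Finset.mem_filter.2 ⟨aux_mem_of_face_subset hM.1 hρM (Finset.sdiff_subset) hnem,
        ?_, ?_⟩
      · ext a
        simp only [Finset.mem_inter, Finset.mem_sdiff, Finset.notMem_empty, iff_false]
        rintro ⟨h1, h2, h3⟩
        exact h3 h1
      · rw [Finset.union_sdiff_of_subset hsub]
        exact hρM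
    · intro τ hτ
      obtain ⟨hτM, hdisj, hu⟩ := Finset.mem_filter.1 hτ
      apply Finset.union_sdiff_cancel_left
      rw [Finset.disjoint_iff_inter_eq_empty]
      exact hdisj
    · intro ρ hρ
      obtain ⟨hρM, hsub, hne⟩ := Finset.mem_filter.1 hρ
      exact Finset.union_sdiff_of_subset hsub
    · intro τ hτ
      obtain ⟨hτM, hdisj, hu⟩ := Finset.mem_filter.1 hτ
      have hd : Disjoint γ τ := by
        rw [Finset.disjoint_iff_inter_eq_empty]; exact hdisj
      have hcu : (γ ∪ τ).card = 4 + τ.card := by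
        rw [Finset.card_union_of_disjoint hd, hγ4]
      have hτpos : 1 ≤ τ.card := Finset.card_pos.2 (hM.1.1 τ hτM)
      rw [hcu]
      congr 1
      omega
  rw [h1] at hE
  -- partition by cardinality
  have h2 : ∑ ρ ∈ M.filter (fun ρ => γ ⊆ ρ ∧ γ ≠ ρ), (-1 : ℤ) ^ (ρ.card - 5)
      = ∑ c ∈ Finset.Icc 5 7,
          (((M.filter (fun ρ => γ ⊆ ρ ∧ γ ≠ ρ)).filter (fun ρ => ρ.card = c)).card : ℤ)
            * (-1) ^ (c - 5) := by
    refine aux_fiber_sum_int _ (fun ρ : Finset (Fin 12) => ρ.card) ?_ (fun c => (-1 : ℤ) ^ (c - 5))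
    intro ρ hρ
    obtain ⟨hρM, hsub, hne⟩ := Finset.mem_filter.1 hρ
    have hlt : γ ⊂ ρ := Finset.ssubset_iff_subset_ne.2 ⟨hsub, hne⟩
    have h4 : 4 < ρ.card := by
      have := Finset.card_lt_card hlt
      omega
    have h7 : ρ.card ≤ 7 := hM.2.1.1 ρ hρM
    simp only [Finset.mem_Icc]
    omega
  rw [h2] at hE
  have hfe : ∀ c : ℕ, 5 ≤ c →
      (M.filter (fun ρ => γ ⊆ ρ ∧ γ ≠ ρ)).filter (fun ρ => ρ.card = c)
        = M.filter (fun σ => σ.card = c ∧ γ ⊆ σ) := by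
    intro c hc
    ext ρ
    simp only [Finset.mem_filter]
    constructor
    · rintro ⟨⟨hρM, hsub, hne⟩, hcard⟩
      exact ⟨hρM, hcard, hsub⟩
    · rintro ⟨hρM, hcard, hsub⟩
      refine ⟨⟨hρM, hsub, fun h => ?_⟩, hcard⟩
      rw [← h] at hcard
      omega
  rw [show (Finset.Icc 5 7 : Finset ℕ) = {5, 6, 7} from by decide] at hE
  rw [Finset.sum_insert (by decide), Finset.sum_insert (by decide),
    Finset.sum_singleton] at hE
  rw [hfe 5 (by norm_num), hfe 6 (by norm_num), hfe 7 (by norm_num)] at hE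
  norm_num at hE
  linarith [hE]


/-- Lemma 4.11: in a 12-vertex 6-dimensional weak pseudomanifold with
complementarity (whose 4-element faces have 2-sphere links), for any fixed facet `α`
the numbers of facets meeting `α` in exactly 3, 4, 5 and 6 vertices are 36, 58, 30
and 7 respectively. -/
theorem stmt_16 (M : Finset (Finset (Fin 12))) (hM : IsWPM 6 M)
    (hvert : ∀ v : Fin 12, ({v} : Finset (Fin 12)) ∈ M)
    (hcomp : Complementarity M)
    (hlink : ∀ γ ∈ M, γ.card = 4 → Is2Sphere (lk M γ))
    (α : Finset (Fin 12)) (hα : α ∈ M) (hαcard : α.card = 7) :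
    (M.filter fun β => β.card = 7 ∧ (α ∩ β).card = 3).card = 36 ∧
    (M.filter fun β => β.card = 7 ∧ (α ∩ β).card = 4).card = 58 ∧
    (M.filter fun β => β.card = 7 ∧ (α ∩ β).card = 5).card = 30 ∧
    (M.filter fun β => β.card = 7 ∧ (α ∩ β).card = 6).card = 7 := by
  classical
  have hcomp' : ∀ A : Finset (Fin 12), A.Nonempty → Aᶜ.Nonempty → (A ∈ M ↔ Aᶜ ∉ M) := hcomp
  -- total number of facets
  have h132 : (M.filter fun β => β.card = 7).card = 132 := aux_facet_count hM hcomp'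
  -- partition facets by intersection size with α
  have hpart : (M.filter fun β => β.card = 7).card
      = ∑ k ∈ Finset.range 8, (M.filter fun β => β.card = 7 ∧ (α ∩ β).card = k).card := by
    have h := aux_fiber_sum (M.filter fun β => β.card = 7) (fun β => (α ∩ β).card)
      (fun β hβ => by
        show (α ∩ β).card < 8
        have := aux_inter_le_seven (β := β) hαcard; omega) (fun _ => 1)
    simp only [mul_one] at h
    rw [Finset.card_eq_sum_ones]
    rw [h]
    refine Finset.sum_congr rfl fun k hk => ?_
    rw [Finset.filter_filter]
  simp only [Finset.sum_range_succ, Finset.sum_range_zero, Nat.zero_add] at hpart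
  have hn0 : (M.filter fun β => β.card = 7 ∧ (α ∩ β).card = 0).card = 0 := by
    rw [Finset.card_eq_zero]
    refine Finset.filter_eq_empty_iff.2 fun β hβ => ?_
    rintro ⟨h7, hi⟩
    have := aux_inter_ge_two hαcard h7
    omega
  have hn1 : (M.filter fun β => β.card = 7 ∧ (α ∩ β).card = 1).card = 0 := by
    rw [Finset.card_eq_zero]
    refine Finset.filter_eq_empty_iff.2 fun β hβ => ?_
    rintro ⟨h7, hi⟩
    have := aux_inter_ge_two hαcard h7
    omega
  have hn7 : (M.filter fun β => β.card = 7 ∧ (α ∩ β).card = 7).card = 1 := by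
    rw [aux_n7 hα hαcard, Finset.card_singleton]
  have hn6 : (M.filter fun β => β.card = 7 ∧ (α ∩ β).card = 6).card = 7 :=
    aux_n6 hM hα hαcard
  -- all 5- and 6-subsets of α are faces
  have hA5 : (M.filter fun s => s.card = 5 ∧ (α ∩ s).card = 5).card = 21 := by
    rw [aux_typefull hM.1 hα (by norm_num), Finset.card_powersetCard, hαcard]
    decide
  have hB6 : (M.filter fun s => s.card = 6 ∧ (α ∩ s).card = 6).card = 7 := by
    rw [aux_typefull hM.1 hα (by norm_num), Finset.card_powersetCard, hαcard]
    decide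
  have hA6 : (M.filter fun s => s.card = 5 ∧ (α ∩ s).card = 6).card = 0 := by
    rw [aux_type_gt (by norm_num)]; rfl
  have hA7 : (M.filter fun s => s.card = 5 ∧ (α ∩ s).card = 7).card = 0 := by
    rw [aux_type_gt (by norm_num)]; rfl
  have hB7 : (M.filter fun s => s.card = 6 ∧ (α ∩ s).card = 7).card = 0 := by
    rw [aux_type_gt (by norm_num)]; rfl
  -- complementarity pairings
  have hp55 := aux_pairing hcomp' hαcard (m := 5) (j := 5) (by norm_num) (by norm_num)
    (by norm_num) (by norm_num)
  norm_num [Nat.choose] at hp55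
  have hp65 := aux_pairing hcomp' hαcard (m := 6) (j := 5) (by norm_num) (by norm_num)
    (by norm_num) (by norm_num)
  norm_num [Nat.choose] at hp65
  have hp54 := aux_pairing hcomp' hαcard (m := 5) (j := 4) (by norm_num) (by norm_num)
    (by norm_num) (by norm_num)
  norm_num [Nat.choose] at hp54
  -- double counts of (6-face, facet) incidences
  have hB2eq := aux_twoB hM hα hαcard 2
  have hB4eq := aux_twoB hM hα hαcard 4
  have hB5eq := aux_twoB hM hα hαcard 5
  simp only [Finset.sum_range_succ, Finset.sum_range_zero] at hB2eq hB4eq hB5eq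
  norm_num at hB2eq hB4eq hB5eq
  -- Euler characteristic relation
  have hall : ∀ γ ∈ α.powersetCard 4,
      ((M.filter fun σ => σ.card = 5 ∧ γ ⊆ σ).card : ℤ)
        - (M.filter fun τ => τ.card = 6 ∧ γ ⊆ τ).card
        + (M.filter fun β => β.card = 7 ∧ γ ⊆ β).card = 2 := by
    intro γ hγ
    obtain ⟨hγα, hγ4⟩ := Finset.mem_powersetCard.1 hγ
    have hγM : γ ∈ M := aux_mem_of_face_subset hM.1 hα hγα (Finset.card_pos.1 (by omega))
    exact aux_euler hM hα hαcard hγ (hlink γ hγM hγ4).2.2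
  have hEsum : (∑ γ ∈ α.powersetCard 4, (M.filter fun σ => σ.card = 5 ∧ γ ⊆ σ).card : ℤ)
      - (∑ γ ∈ α.powersetCard 4, (M.filter fun τ => τ.card = 6 ∧ γ ⊆ τ).card : ℕ)
      + (∑ γ ∈ α.powersetCard 4, (M.filter fun β => β.card = 7 ∧ γ ⊆ β).card : ℕ) = 70 := by
    have h := Finset.sum_congr rfl hall
    rw [Finset.sum_const, Finset.card_powersetCard, hαcard] at h
    rw [Finset.sum_add_distrib, Finset.sum_sub_distrib] at h
    push_cast
    push_cast at h
    convert h using 2 <;> norm_num [Nat.choose]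
  have hV := aux_sumVEF hM.1 hα hαcard 5
  have hE6 := aux_sumVEF hM.1 hα hαcard 6
  have hF := aux_sumVEF hM.1 hα hαcard 7
  simp only [Finset.sum_range_succ, Finset.sum_range_zero] at hV hE6 hF
  norm_num [Nat.choose] at hV hE6 hF
  rw [← Nat.cast_sum] at hEsum
  rw [hV, hE6, hF] at hEsum
  refine ⟨by omega, by omega, by omega, by omega⟩
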